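/- Let γ_1 < γ_2 be real labels and let ρ : ℝ → ℝ. Define the lifted dataterm ρ_lift : ℝ → ℝ ∪ {+∞} by ρ_lift(u) = ρ(γ_1 + u·(γ_2 − γ_1)) for u ∈ [0,1] and ρ_lift(u) = +∞ otherwise. Then for every u ∈ ℝ, ρ_lift^{**}(u) = (ρ + δ_{[γ_1, γ_2]})^{**}( γ_1 + u·(γ_2 − γ_1) ), i.e. in the binary-label case the lifted biconjugate equals the convex envelope of ρ restricted to [γ_1, γ_2], composed with the affine reparametrization u ↦ γ_1 + u(γ_2 − γ_1). -/

import Mathlib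

/-- Scalar convex conjugate: `f^*(v) = sup_u (v·u - f(u))`. -/
noncomputable def conj1 (f : ℝ → EReal) (v : ℝ) : EReal :=
  ⨆ u : ℝ, ((v * u : ℝ) : EReal) - f u

/-- `ρ + δ_{[a,b]}` : equals `ρ` on `[a,b]` and `+∞` elsewhere. -/
noncomputable def rhoRestr (ρ : ℝ → ℝ) (a b : ℝ) : ℝ → EReal :=
  fun t => if t ∈ Set.Icc a b then (ρ t : EReal) else ⊤

lemma ereal_iSup_add {ι : Sort*} (f : ι → EReal) (r : ℝ) :
    (⨆ i, f i) + (r : EReal) = ⨆ i, f i + (r : EReal) := by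
  apply le_antisymm
  · rw [← EReal.le_sub_iff_add_le (Or.inl (EReal.coe_ne_bot r)) (Or.inl (EReal.coe_ne_top r))]
    apply iSup_le
    intro i
    rw [EReal.le_sub_iff_add_le (Or.inl (EReal.coe_ne_bot r)) (Or.inl (EReal.coe_ne_top r))]
    exact le_iSup (fun i => f i + (r : EReal)) i
  · apply iSup_le
    intro i
    exact add_le_add_left (le_iSup f i) _

lemma ereal_iSup_sub {ι : Sort*} (f : ι → EReal) (r : ℝ) :
    (⨆ i, f i) - (r : EReal) = ⨆ i, f i - (r : EReal) := by
  have := ereal_iSup_add f (-r)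
  simpa [sub_eq_add_neg, EReal.coe_neg] using this

lemma ereal_sub_sub (x s : ℝ) (b : EReal) :
    ((x : EReal) - b) - (s : EReal) = (((x - s : ℝ) : EReal)) - b := by
  induction b with
  | bot => rw [EReal.coe_sub_bot, EReal.top_sub_coe, EReal.coe_sub_bot]
  | coe y => rw [← EReal.coe_sub, ← EReal.coe_sub, ← EReal.coe_sub]; ring_nf
  | top => simp

lemma ereal_sub_sub' (a r : ℝ) (b : EReal) (hb : b ≠ ⊥) :
    (a : EReal) - (b - (r : EReal)) = (((a + r : ℝ) : EReal)) - b := by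
  induction b with
  | bot => exact absurd rfl hb
  | coe y =>
      rw [← EReal.coe_sub, ← EReal.coe_sub, ← EReal.coe_sub]; ring_nf
  | top => simp [EReal.top_sub_coe]

lemma conj1_lift (γ1 γ2 : ℝ) (h : γ1 < γ2) (ρ : ℝ → ℝ) (v : ℝ) :
    conj1 (fun w =>
        if w ∈ Set.Icc (0:ℝ) 1 then (ρ (γ1 + w * (γ2 - γ1)) : EReal) else ⊤) v
      = conj1 (rhoRestr ρ γ1 γ2) (v / (γ2 - γ1))
          - ((v * γ1 / (γ2 - γ1) : ℝ) : EReal) := by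
  have hc : (0:ℝ) < γ2 - γ1 := sub_pos.mpr h
  have hc' : (γ2 - γ1) ≠ 0 := ne_of_gt hc
  set c := γ2 - γ1 with hcdef
  rw [conj1, conj1, ereal_iSup_sub,
    ← Equiv.iSup_comp
      (g := fun t => ((v / c * t : ℝ) : EReal) - rhoRestr ρ γ1 γ2 t
        - ((v * γ1 / c : ℝ) : EReal))
      ⟨fun w => γ1 + w * c, fun t => (t - γ1) / c,
        fun w => by field_simp; ring, fun t => by field_simp; ring⟩]
  simp only [Equiv.coe_fn_mk]
  apply iSup_congr
  intro w
  show ((v * w : ℝ) : EReal) - _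
      = ((v / c * (γ1 + w * c) : ℝ) : EReal) - rhoRestr ρ γ1 γ2 (γ1 + w * c)
        - ((v * γ1 / c : ℝ) : EReal)
  rw [ereal_sub_sub]
  have hco : v / c * (γ1 + w * c) - v * γ1 / c = v * w := by field_simp; ring
  rw [hco]
  congr 1
  have hmem : (γ1 + w * c ∈ Set.Icc γ1 γ2) ↔ (w ∈ Set.Icc (0:ℝ) 1) := by
    simp only [Set.mem_Icc]
    constructor
    · rintro ⟨h1, h2⟩
      constructor
      · nlinarith
      · nlinarith
    · rintro ⟨h1, h2⟩
      constructor
      · nlinarith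
      · nlinarith
  rw [rhoRestr]
  by_cases hw : w ∈ Set.Icc (0:ℝ) 1
  · rw [if_pos hw, if_pos (hmem.mpr hw)]
  · rw [if_neg hw, if_neg (fun hx => hw (hmem.mp hx))]

lemma conj1_restr_ne_bot (γ1 γ2 : ℝ) (h : γ1 < γ2) (ρ : ℝ → ℝ) (p : ℝ) :
    conj1 (rhoRestr ρ γ1 γ2) p ≠ ⊥ := by
  have h1 : ((p * γ1 : ℝ) : EReal) - rhoRestr ρ γ1 γ2 γ1
      ≤ conj1 (rhoRestr ρ γ1 γ2) p :=
    le_iSup (fun t => ((p * t : ℝ) : EReal) - rhoRestr ρ γ1 γ2 t) γ1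
  rw [rhoRestr, if_pos (by exact ⟨le_refl _, le_of_lt h⟩), ← EReal.coe_sub] at h1
  intro hb
  rw [hb, le_bot_iff] at h1
  exact EReal.coe_ne_bot _ h1

theorem biconj_binary_lift (γ1 γ2 : ℝ) (h : γ1 < γ2) (ρ : ℝ → ℝ) (u : ℝ) :
    conj1 (conj1 (fun w =>
        if w ∈ Set.Icc (0:ℝ) 1 then (ρ (γ1 + w * (γ2 - γ1)) : EReal) else ⊤)) u
      = conj1 (conj1 (rhoRestr ρ γ1 γ2)) (γ1 + u * (γ2 - γ1)) := by
  have hc : (0:ℝ) < γ2 - γ1 := sub_pos.mpr h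
  have hc' : (γ2 - γ1) ≠ 0 := ne_of_gt hc
  rw [conj1, conj1,
    ← Equiv.iSup_comp
      (g := fun v => ((u * v : ℝ) : EReal)
        - conj1 (fun w =>
            if w ∈ Set.Icc (0:ℝ) 1 then (ρ (γ1 + w * (γ2 - γ1)) : EReal) else ⊤) v)
      ⟨fun p => (γ2 - γ1) * p, fun v => v / (γ2 - γ1),
        fun p => by field_simp, fun v => by field_simp⟩]
  simp only [Equiv.coe_fn_mk]
  apply iSup_congr
  intro p
  show ((u * ((γ2 - γ1) * p) : ℝ) : EReal) - _ = _
  rw [conj1_lift γ1 γ2 h ρ ((γ2 - γ1) * p)]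
  have e1 : (γ2 - γ1) * p / (γ2 - γ1) = p := by field_simp
  have e2 : (γ2 - γ1) * p * γ1 / (γ2 - γ1) = p * γ1 := by field_simp
  rw [e1, e2, ereal_sub_sub' _ _ _ (conj1_restr_ne_bot γ1 γ2 h ρ p)]
  congr 2
  ring
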